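/- For every horizon m ≥ 0, every μ ∈ ℝ and every n > 0, the map λ ↦ V_m(μ,n,γ,τ,λ) is nonincreasing and Lipschitz continuous with Lipschitz constant 1/(1−γ): if λ ≤ λ' then V_m(μ,n,γ,τ,λ') ≤ V_m(μ,n,γ,τ,λ), and |V_m(μ,n,γ,τ,λ) − V_m(μ,n,γ,τ,λ')| ≤ |λ − λ'|/(1−γ) for all λ, λ'. -/

import Mathlib

open MeasureTheory ProbabilityTheory

/-- Finite-horizon value function of the Gaussian one-armed bandit:
`V γ τ m μ n λ`, with discount `γ`, observation precision `τ`, horizon `m`,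
posterior state `(μ, n)` and safe-arm reward `λ`. The expectation over the
next observation is taken under the Gaussian predictive distribution
`𝒩(μ, 1/n + 1/τ)`. -/
noncomputable def V (γ τ : ℝ) : ℕ → ℝ → ℝ → ℝ → ℝ
  | 0, μ, _n, lam => max (μ - lam) 0 / (1 - γ)
  | m + 1, μ, n, lam =>
      max (μ - lam + γ * ∫ y, V γ τ m ((n * μ + τ * y) / (n + τ)) (n + τ) lam
        ∂(gaussianReal μ (1 / n + 1 / τ).toNNReal)) 0

/-- Measurability of the value function in the posterior mean. -/
lemma V_measurable (γ τ : ℝ) :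
    ∀ m : ℕ, ∀ n lam : ℝ, Measurable (fun μ => V γ τ m μ n lam) := by
  intro m
  induction m with
  | zero =>
    intro n lam
    simp only [V]
    fun_prop
  | succ m ih =>
    intro n lam
    set v : NNReal := (1 / n + 1 / τ).toNNReal with hv
    have key : ∀ μ : ℝ,
        (∫ y, V γ τ m ((n * μ + τ * y) / (n + τ)) (n + τ) lam ∂(gaussianReal μ v))
          = ∫ z, V γ τ m ((n * μ + τ * (z + μ)) / (n + τ)) (n + τ) lam
              ∂(gaussianReal 0 v) := by
      intro μ
      have hmap : (gaussianReal 0 v).map (· + μ) = gaussianReal μ v := by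
        rw [gaussianReal_map_add_const]; simp
      rw [← hmap, integral_map (measurable_id'.add_const μ).aemeasurable]
      exact ((ih (n + τ) lam).comp (by fun_prop)).aestronglyMeasurable
    have hF : StronglyMeasurable fun p : ℝ × ℝ =>
        V γ τ m ((n * p.1 + τ * (p.2 + p.1)) / (n + τ)) (n + τ) lam :=
      ((ih (n + τ) lam).comp (by fun_prop)).stronglyMeasurable
    have hG : Measurable fun μ : ℝ =>
        ∫ z, V γ τ m ((n * μ + τ * (z + μ)) / (n + τ)) (n + τ) lam
          ∂(gaussianReal 0 v) :=
      hF.integral_prod_right'.measurable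
    have : (fun μ => V γ τ (m + 1) μ n lam)
        = fun μ => max (μ - lam + γ * ∫ z,
            V γ τ m ((n * μ + τ * (z + μ)) / (n + τ)) (n + τ) lam
              ∂(gaussianReal 0 v)) 0 := by
      funext μ
      simp only [V]; rw [← hv, key μ]
    rw [this]
    fun_prop

/-- Transfer of integrability along a pointwise bounded perturbation. -/
lemma integrable_of_bounded_diff {P : Measure ℝ} [IsProbabilityMeasure P]
    {f g : ℝ → ℝ} (hf : Integrable f P) (hg : Measurable g) (C : ℝ)
    (h : ∀ y, |g y - f y| ≤ C) : Integrable g P := by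
  have hint : Integrable (fun y => |f y| + C) P := hf.abs.add (integrable_const C)
  refine hint.mono' hg.aestronglyMeasurable ?_
  filter_upwards with y
  rw [Real.norm_eq_abs]
  have h1 := h y
  have h2 := abs_sub_abs_le_abs_sub (g y) (f y)
  linarith

/-- For every horizon `m`, every `μ` and `n > 0`, the map
`λ ↦ V_m(μ,n,γ,τ,λ)` is nonincreasing and Lipschitz with constant
`1/(1−γ)`. -/
theorem nmab_value_lambda_monotone_lipschitz (γ τ : ℝ)
    (hγ0 : 0 ≤ γ) (hγ1 : γ < 1) (hτ : 0 < τ) :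
    ∀ m : ℕ, ∀ μ n : ℝ, 0 < n →
      (∀ lam lam' : ℝ, lam ≤ lam' →
        V γ τ m μ n lam' ≤ V γ τ m μ n lam) ∧
      (∀ lam lam' : ℝ,
        |V γ τ m μ n lam - V γ τ m μ n lam'| ≤ |lam - lam'| / (1 - γ)) := by
  have hγ : 0 < 1 - γ := by linarith
  intro m
  induction m with
  | zero =>
    intro μ n _hn
    constructor
    · intro lam lam' hle
      simp only [V]
      exact div_le_div_of_nonneg_right (max_le_max (by linarith) le_rfl) hγ.le
    · intro lam lam'
      simp only [V]
      rw [div_sub_div_same, abs_div, abs_of_pos hγ]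
      refine div_le_div_of_nonneg_right ?_ hγ.le
      calc |max (μ - lam) 0 - max (μ - lam') 0| ≤ |(μ - lam) - (μ - lam')| :=
            abs_max_sub_max_le_abs _ _ _
        _ = |lam - lam'| := by rw [abs_sub_comm]; ring_nf
  | succ m ih =>
    intro μ n hn
    have hn' : 0 < n + τ := by linarith
    set v : NNReal := (1 / n + 1 / τ).toNNReal with hv
    set P := gaussianReal μ v with hP
    -- integrands
    set f : ℝ → ℝ → ℝ := fun lam y => V γ τ m ((n * μ + τ * y) / (n + τ)) (n + τ) lam
      with hf
    have hmeas : ∀ lam, Measurable (f lam) := fun lam =>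
      (V_measurable γ τ m (n + τ) lam).comp (by fun_prop)
    have hbd : ∀ lam lam' y, |f lam y - f lam' y| ≤ |lam - lam'| / (1 - γ) :=
      fun lam lam' y => ((ih _ (n + τ) hn').2 lam lam')
    have hmono : ∀ lam lam', lam ≤ lam' → ∀ y, f lam' y ≤ f lam y :=
      fun lam lam' h y => (ih _ (n + τ) hn').1 lam lam' h
    -- integrability transfers between parameters
    have htrans : ∀ lam lam', Integrable (f lam) P → Integrable (f lam') P := by
      intro lam lam' hint
      exact integrable_of_bounded_diff hint (hmeas lam') (|lam' - lam| / (1 - γ))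
        (fun y => hbd lam' lam y)
    have hVdef : ∀ lam, V γ τ (m + 1) μ n lam
        = max (μ - lam + γ * ∫ y, f lam y ∂P) 0 := fun lam => rfl
    constructor
    · intro lam lam' hle
      rw [hVdef, hVdef]
      by_cases hint : Integrable (f lam) P
      · have hint' : Integrable (f lam') P := htrans lam lam' hint
        have : (∫ y, f lam' y ∂P) ≤ ∫ y, f lam y ∂P :=
          integral_mono hint' hint (hmono lam lam' hle)
        have := mul_le_mul_of_nonneg_left this hγ0
        exact max_le_max (by linarith) le_rfl
      · have hint' : ¬ Integrable (f lam') P := fun h => hint (htrans lam' lam h)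
        rw [integral_undef hint, integral_undef hint']
        exact max_le_max (by linarith) le_rfl
    · intro lam lam'
      rw [hVdef, hVdef]
      by_cases hint : Integrable (f lam) P
      · have hint' : Integrable (f lam') P := htrans lam lam' hint
        have hI : |(∫ y, f lam y ∂P) - ∫ y, f lam' y ∂P| ≤ |lam - lam'| / (1 - γ) := by
          rw [← integral_sub hint hint']
          have := norm_integral_le_of_norm_le_const (μ := P)
            (f := fun y => f lam y - f lam' y) (C := |lam - lam'| / (1 - γ))
            (Filter.Eventually.of_forall fun y => by
              rw [Real.norm_eq_abs]; exact hbd lam lam' y)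
          simpa [Real.norm_eq_abs] using this
        calc |max (μ - lam + γ * ∫ y, f lam y ∂P) 0
              - max (μ - lam' + γ * ∫ y, f lam' y ∂P) 0|
            ≤ |(μ - lam + γ * ∫ y, f lam y ∂P)
              - (μ - lam' + γ * ∫ y, f lam' y ∂P)| := abs_max_sub_max_le_abs _ _ _
          _ = |(lam' - lam) + γ * ((∫ y, f lam y ∂P) - ∫ y, f lam' y ∂P)| := by
              ring_nf
          _ ≤ |lam' - lam| + γ * |(∫ y, f lam y ∂P) - ∫ y, f lam' y ∂P| := by
              refine (abs_add_le _ _).trans ?_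
              rw [abs_mul, abs_of_nonneg hγ0]
          _ ≤ |lam - lam'| + γ * (|lam - lam'| / (1 - γ)) := by
              rw [abs_sub_comm lam' lam]
              gcongr
          _ = |lam - lam'| / (1 - γ) := by field_simp; ring
      · have hint' : ¬ Integrable (f lam') P := fun h => hint (htrans lam' lam h)
        rw [integral_undef hint, integral_undef hint']
        have h1 : |max (μ - lam + γ * 0) 0 - max (μ - lam' + γ * 0) 0|
            ≤ |lam - lam'| := by
          calc _ ≤ |(μ - lam + γ * 0) - (μ - lam' + γ * 0)| := abs_max_sub_max_le_abs _ _ _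
            _ = |lam - lam'| := by rw [abs_sub_comm]; ring_nf
        refine h1.trans ?_
        rw [le_div_iff₀ hγ]
        nlinarith [abs_nonneg (lam - lam')]
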